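/- Let X be a scheme of finite type over an algebraically closed field of characteristic p > 0 that is Frobenius split, compatibly with closed subschemes Y₁ and Y₂ (both with respect to the same splitting s). Then the scheme-theoretic intersection Y₁ ∩ Y₂ is also compatibly split by s; in particular Y₁ ∩ Y₂ is reduced. -/
import Mathlib


open AlgebraicGeometry CategoryTheory Opposite

/-- An ideal sheaf on a scheme `X`, given section-wise: an ideal of `Γ(X, U)`
for every open `U`, compatible with restriction.  It defines a closed subscheme
`Y` of `X`. -/
structure SchemeIdealSheaf (X : AlgebraicGeometry.Scheme) where
  ideal : ∀ U : X.Opens, Ideal Γ(X, U)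
  map_mem : ∀ {U V : X.Opens} (h : V ≤ U), ∀ a ∈ ideal U,
    X.presheaf.map (homOfLE h).op a ∈ ideal V

/-- A Frobenius splitting of a scheme `X` of characteristic `p`, given
section-wise: an additive map `s U : Γ(X, U) → Γ(X, U)` for every open `U`,
compatible with restriction, which is `O_X`-linear for the Frobenius
(`s(aᵖ b) = a s(b)`) and splits the `p`-th power map `F^♯` (`s(aᵖ) = a`).
This encodes an `O_X`-linear map `s : F_* O_X → O_X` with `s ∘ F^♯ = id`. -/
structure SchemeFrobSplitting (X : AlgebraicGeometry.Scheme) (p : ℕ) where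
  s : ∀ U : X.Opens, Γ(X, U) → Γ(X, U)
  map_add : ∀ (U : X.Opens) (a b : Γ(X, U)), s U (a + b) = s U a + s U b
  semilinear : ∀ (U : X.Opens) (a b : Γ(X, U)), s U (a ^ p * b) = a * s U b
  splits : ∀ (U : X.Opens) (a : Γ(X, U)), s U (a ^ p) = a
  res : ∀ {U V : X.Opens} (h : V ≤ U) (a : Γ(X, U)),
    X.presheaf.map (homOfLE h).op (s U a) = s V (X.presheaf.map (homOfLE h).op a)

/-- Let `X` be a scheme of finite type over an algebraically
closed field of characteristic `p > 0` which is Frobenius split, compatibly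
with closed subschemes `Y₁` and `Y₂` (with respect to the same splitting `s`).
Then the scheme-theoretic intersection `Y₁ ∩ Y₂` — the closed subscheme with
ideal sheaf `I_{Y₁} + I_{Y₂}` — is also compatibly split by `s`; in particular
`Y₁ ∩ Y₂` is reduced (its ideal sheaf is radical). -/
theorem stmt_1 (k : Type) [Field k] [IsAlgClosed k] (p : ℕ) (hp : p.Prime)
    [CharP k p] (X : AlgebraicGeometry.Scheme)
    (f : X ⟶ AlgebraicGeometry.Spec (CommRingCat.of k)) [LocallyOfFiniteType f]
    [QuasiCompact f]
    (s : SchemeFrobSplitting X p) (I₁ I₂ : SchemeIdealSheaf X)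
    (hcompat₁ : ∀ (U : X.Opens), ∀ a ∈ I₁.ideal U, s.s U a ∈ I₁.ideal U)
    (hcompat₂ : ∀ (U : X.Opens), ∀ a ∈ I₂.ideal U, s.s U a ∈ I₂.ideal U) :
    (∀ (U : X.Opens), ∀ a ∈ I₁.ideal U ⊔ I₂.ideal U,
        s.s U a ∈ I₁.ideal U ⊔ I₂.ideal U) ∧
    ∀ U : X.Opens, (I₁.ideal U ⊔ I₂.ideal U : Ideal Γ(X, U)).IsRadical := by
  have hsup : ∀ (U : X.Opens), ∀ a ∈ I₁.ideal U ⊔ I₂.ideal U,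
      s.s U a ∈ I₁.ideal U ⊔ I₂.ideal U := by
    intro U a ha
    rw [Submodule.mem_sup] at ha ⊢
    obtain ⟨b, hb, c, hc, rfl⟩ := ha
    exact ⟨s.s U b, hcompat₁ U b hb, s.s U c, hcompat₂ U c hc, (s.map_add U b c).symm⟩
  refine ⟨hsup, fun U => ?_⟩
  rw [Ideal.isRadical_iff_pow_one_lt p hp.one_lt]
  intro a ha
  have key : ∀ k (x : Γ(X, U)), x ^ p ^ k ∈ I₁.ideal U ⊔ I₂.ideal U →
      x ∈ I₁.ideal U ⊔ I₂.ideal U := by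
    intro k
    induction k with
    | zero => intro x hx; simpa using hx
    | succ k ih =>
      intro x hx
      apply ih
      have := hsup U _ hx
      rwa [pow_succ, pow_mul, s.splits] at this
  exact key 1 a (by simpa using ha)
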